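/- arXiv:1409.7930 — 6 statements merged into one kernel-verified Lean document; each statement's English description precedes it below -/
import Mathlib

section
/- Let T and s be positive natural numbers with gcd(s, T) = 1, let a be any natural number, and let o : ℕ → ℝ be T-periodic with o(n) ∈ {0, 1} for all n and with Σ_{t=0}^{T−1} o(t) > 0. Then the ratios (Σ_{n=0}^{N−1} o(a + n·s)·o(a + n·s + 1)) / (Σ_{n=0}^{N−1} o(a + n·s)) converge, as N → ∞, to (Σ_{t=0}^{T−1} o(t)·o(t+1)) / (Σ_{t=0}^{T−1} o(t)). In particular the limit does not depend on a or on s. -/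
open Filter Finset

private lemma shift_mul {T : ℕ} {h : ℕ → ℝ} (hper : ∀ n, h (n + T) = h n) :
    ∀ (q x : ℕ), h (x + q * T) = h x := by
  intro q
  induction q with
  | zero => simp
  | succ q ih =>
    intro x
    have : x + (q + 1) * T = (x + q * T) + T := by ring
    rw [this, hper, ih]

private lemma sum_block {T : ℕ} {h : ℕ → ℝ} (hper : ∀ n, h (n + T) = h n) (q : ℕ) :
    ∑ n ∈ range (q * T), h n = q * ∑ n ∈ range T, h n := by
  induction q with
  | zero => simp
  | succ q ih =>
    rw [Nat.succ_mul, Finset.sum_range_add, ih]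
    have : ∀ x, h (q * T + x) = h x := fun x => by
      rw [add_comm, shift_mul hper]
    rw [Finset.sum_congr rfl (fun x _ => this x)]
    push_cast; ring

private lemma sum_decomp {T : ℕ} {h : ℕ → ℝ} (hper : ∀ n, h (n + T) = h n) (N : ℕ) :
    ∑ n ∈ range N, h n
      = (N / T : ℕ) * ∑ n ∈ range T, h n + ∑ n ∈ range (N % T), h n := by
  conv_lhs => rw [← Nat.div_add_mod N T]
  rw [mul_comm T (N / T), Finset.sum_range_add, sum_block hper]
  congr 1
  exact Finset.sum_congr rfl fun x _ => by rw [add_comm, shift_mul hper]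

private lemma div_floor_tendsto {T : ℕ} (hT : 0 < T) :
    Tendsto (fun N : ℕ => ((N / T : ℕ) : ℝ) / (N : ℝ)) atTop (nhds (1 / T)) := by
  have hT' : (T : ℝ) ≠ 0 := Nat.cast_ne_zero.mpr hT.ne'
  have key : (fun N : ℕ => 1 / (T:ℝ) - ((N % T : ℕ) : ℝ) / T / N)
      =ᶠ[atTop] (fun N : ℕ => ((N / T : ℕ) : ℝ) / (N : ℝ)) := by
    filter_upwards [eventually_ge_atTop 1] with N hN
    have hN' : (N : ℝ) ≠ 0 := Nat.cast_ne_zero.mpr (by omega)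
    have hcast : (T : ℝ) * ((N / T : ℕ) : ℝ) + ((N % T : ℕ) : ℝ) = (N : ℝ) := by
      exact_mod_cast congrArg (Nat.cast : ℕ → ℝ) (Nat.div_add_mod N T)
    field_simp
    nlinarith [hcast]
  have h2 : Tendsto (fun N : ℕ => ((N % T : ℕ) : ℝ) / T / N) atTop (nhds 0) := by
    apply squeeze_zero_norm' (a := fun N : ℕ => (T : ℝ) / N)
    · filter_upwards [eventually_ge_atTop 1] with N hN
      have h1 : ((N % T : ℕ) : ℝ) / T ≤ T := by
        rw [div_le_iff₀ (by positivity)]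
        have : ((N % T : ℕ) : ℝ) ≤ T := by exact_mod_cast (Nat.mod_lt N hT).le
        nlinarith [show (1:ℝ) ≤ T from Nat.one_le_cast.mpr hT]
      have h0 : (0:ℝ) ≤ ((N % T : ℕ) : ℝ) / T := by positivity
      rw [Real.norm_eq_abs, abs_div, abs_of_nonneg h0, Nat.abs_cast]
      exact div_le_div_of_nonneg_right h1 (Nat.cast_nonneg N)
    · exact tendsto_const_div_atTop_nhds_zero_nat (T : ℝ)
  have := (tendsto_const_nhds (x := (1:ℝ)/T) (f := atTop)).sub h2
  rw [sub_zero] at this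
  exact Tendsto.congr' key this

private lemma avg_tendsto {T : ℕ} (hT : 0 < T) {h : ℕ → ℝ} (hper : ∀ n, h (n + T) = h n) :
    Tendsto (fun N : ℕ => (∑ n ∈ range N, h n) / N) atTop
      (nhds ((∑ n ∈ range T, h n) / T)) := by
  set C := ∑ n ∈ range T, h n with hC
  set M := ∑ n ∈ range T, |h n| with hM
  have heq : ∀ N : ℕ, (∑ n ∈ range N, h n) / N
      = ((N / T : ℕ) : ℝ) / N * C + (∑ n ∈ range (N % T), h n) / N := by
    intro N
    rw [sum_decomp hper N, add_div, mul_div_right_comm]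
  have h2 : Tendsto (fun N : ℕ => (∑ n ∈ range (N % T), h n) / N) atTop (nhds 0) := by
    apply squeeze_zero_norm' (a := fun N : ℕ => M / N)
    · filter_upwards [eventually_ge_atTop 1] with N hN
      have hb : |∑ n ∈ range (N % T), h n| ≤ M := by
        refine (Finset.abs_sum_le_sum_abs _ _).trans ?_
        exact Finset.sum_le_sum_of_subset_of_nonneg
          (Finset.range_subset_range.2 (Nat.mod_lt N hT).le) (fun i _ _ => abs_nonneg _)
      rw [Real.norm_eq_abs, abs_div, Nat.abs_cast]
      exact div_le_div_of_nonneg_right hb (Nat.cast_nonneg N)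
    · exact tendsto_const_div_atTop_nhds_zero_nat M
  have h1 := (div_floor_tendsto hT).mul_const C
  have := h1.add h2
  rw [add_zero, one_div, inv_mul_eq_div] at this
  exact Tendsto.congr (fun N => (heq N).symm) this

private lemma sum_range_zmod {T : ℕ} [NeZero T] (F : ZMod T → ℝ) :
    ∑ n ∈ range T, F (n : ZMod T) = ∑ x : ZMod T, F x := by
  have hT : 0 < T := Nat.pos_of_ne_zero (NeZero.ne T)
  rw [← Fin.sum_univ_eq_sum_range (fun n => F (n : ZMod T)) T]
  refine Fintype.sum_bijective (fun i : Fin T => (((i : ℕ) : ZMod T)))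
    ?_ _ _ (fun i => rfl)
  rw [Fintype.bijective_iff_injective_and_card]
  refine ⟨fun i j hij => ?_, by simp [ZMod.card]⟩
  have := congrArg ZMod.val hij
  rw [ZMod.val_natCast, ZMod.val_natCast] at this
  exact Fin.ext (by simpa [Nat.mod_eq_of_lt i.2, Nat.mod_eq_of_lt j.2] using this)

private lemma fold_sum {T s : ℕ} [NeZero T] (hgcd : Nat.gcd s T = 1) (a : ℕ)
    (F : ZMod T → ℝ) :
    ∑ n ∈ range T, F ((a : ZMod T) + (n : ZMod T) * (s : ZMod T))
      = ∑ n ∈ range T, F (n : ZMod T) := by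
  rw [sum_range_zmod (fun x => F ((a : ZMod T) + x * (s : ZMod T))),
    sum_range_zmod F]
  set u : (ZMod T)ˣ := ZMod.unitOfCoprime s hgcd with hu
  have hus : (u : ZMod T) = (s : ZMod T) := ZMod.coe_unitOfCoprime s hgcd
  let e : ZMod T ≃ ZMod T :=
    { toFun := fun x => (a : ZMod T) + x * (u : ZMod T)
      invFun := fun y => (y - (a : ZMod T)) * ((u⁻¹ : (ZMod T)ˣ) : ZMod T)
      left_inv := fun x => by
        show ((a : ZMod T) + x * (u : ZMod T) - (a : ZMod T)) * ((u⁻¹ : (ZMod T)ˣ) : ZMod T) = x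
        rw [add_sub_cancel_left, mul_assoc, Units.mul_inv, mul_one]
      right_inv := fun y => by
        show (a : ZMod T) + (y - (a : ZMod T)) * ((u⁻¹ : (ZMod T)ˣ) : ZMod T) * (u : ZMod T) = y
        rw [mul_assoc, Units.inv_mul, mul_one]; ring }
  have : ∀ x : ZMod T, F ((a : ZMod T) + x * (s : ZMod T)) = F (e x) := by
    intro x; simp [e, hus]
  rw [Finset.sum_congr rfl (fun x _ => this x)]
  exact Equiv.sum_comp e F

/-- For `gcd(s, T) = 1` and a binary `T`-periodic observation stream `o` with positive
full-period sum, the empirical conditional probabilities obtained by folding at step `s`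
from offset `a` converge to the full-period conditional frequency;
in particular the limit does not depend on `a` or `s`. -/
theorem stmt3 (T s : ℕ) (hT : 0 < T) (hs : 0 < s) (hgcd : Nat.gcd s T = 1) (a : ℕ)
    (o : ℕ → ℝ) (hper : ∀ n, o (n + T) = o n) (hbin : ∀ n, o n = 0 ∨ o n = 1)
    (hpos : 0 < ∑ t ∈ Finset.range T, o t) :
    Filter.Tendsto
      (fun N : ℕ =>
        (∑ n ∈ Finset.range N, o (a + n * s) * o (a + n * s + 1)) /
          (∑ n ∈ Finset.range N, o (a + n * s)))
      Filter.atTop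
      (nhds ((∑ t ∈ Finset.range T, o t * o (t + 1)) / (∑ t ∈ Finset.range T, o t))) := by
  haveI : NeZero T := ⟨hT.ne'⟩
  have hshift : ∀ q x : ℕ, o (x + q * T) = o x := shift_mul hper
  set φ : ZMod T → ℝ := fun x => o x.val with hφdef
  have hφ : ∀ m : ℕ, o m = φ ((m : ZMod T)) := by
    intro m
    have h1 : o (m % T) = o m := by
      conv_rhs => rw [← Nat.mod_add_div m T, mul_comm T (m / T)]
      rw [hshift]
    simp only [hφdef, ZMod.val_natCast]
    exact h1.symm
  have hgper : ∀ n, o (a + (n + T) * s) = o (a + n * s) := by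
    intro n
    have h : a + (n + T) * s = (a + n * s) + s * T := by ring
    rw [h, hshift]
  have hfper : ∀ n, o (a + (n + T) * s) * o (a + (n + T) * s + 1)
      = o (a + n * s) * o (a + n * s + 1) := by
    intro n
    have h : a + (n + T) * s + 1 = (a + n * s + 1) + s * T := by ring
    rw [hgper, h, hshift]
  have hsg : ∑ n ∈ range T, o (a + n * s) = ∑ t ∈ range T, o t := by
    have h1 : ∀ n ∈ range T,
        o (a + n * s) = φ ((a : ZMod T) + (n : ZMod T) * (s : ZMod T)) := by
      intro n _; rw [hφ (a + n * s)]; push_cast; ring_nf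
    rw [Finset.sum_congr rfl h1, fold_sum hgcd a φ]
    exact Finset.sum_congr rfl fun t _ => (hφ t).symm
  have hsf : ∑ n ∈ range T, o (a + n * s) * o (a + n * s + 1)
      = ∑ t ∈ range T, o t * o (t + 1) := by
    set F : ZMod T → ℝ := fun x => φ x * φ (x + 1) with hF
    have hFnat : ∀ m : ℕ, o m * o (m + 1) = F ((m : ZMod T)) := by
      intro m
      rw [hF]
      rw [hφ m, hφ (m + 1)]
      push_cast
      ring_nf
    have h1 : ∀ n ∈ range T,
        o (a + n * s) * o (a + n * s + 1)
          = F ((a : ZMod T) + (n : ZMod T) * (s : ZMod T)) := by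
      intro n _; rw [hFnat (a + n * s)]; push_cast; ring_nf
    rw [Finset.sum_congr rfl h1, fold_sum hgcd a F]
    exact Finset.sum_congr rfl fun t _ => (hFnat t).symm
  have Tf := avg_tendsto hT (h := fun n => o (a + n * s) * o (a + n * s + 1)) hfper
  have Tg := avg_tendsto hT (h := fun n => o (a + n * s)) hgper
  rw [hsf] at Tf
  rw [hsg] at Tg
  have hTne : (T : ℝ) ≠ 0 := Nat.cast_ne_zero.mpr hT.ne'
  have hBT : (∑ t ∈ range T, o t) / (T : ℝ) ≠ 0 :=
    (div_pos hpos (Nat.cast_pos.mpr hT)).ne'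
  have hdiv := Tf.div Tg hBT
  rw [div_div_div_comm, div_self hTne, div_one] at hdiv
  refine hdiv.congr' ?_
  filter_upwards [eventually_ge_atTop 1] with N hN
  have hNne : (N : ℝ) ≠ 0 := Nat.cast_ne_zero.mpr (by omega)
  show ((∑ n ∈ range N, o (a + n * s) * o (a + n * s + 1)) / (N:ℝ)) /
      ((∑ n ∈ range N, o (a + n * s)) / (N:ℝ)) = _
  rw [div_div_div_comm, div_self hNne, div_one]
end

section
/- Let T be an even positive natural number, s an even positive natural number with gcd(s, T) = 2, and a any natural number. Then for every natural number N and every residue r < T: the number of indices n with n < N·(T/2) such that (a + n·s) % T = r equals N if r % 2 = a % 2, and equals 0 otherwise. -/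
open Finset

private lemma filterRangeAdd (p : ℕ → Prop) [DecidablePred p] (m k : ℕ) :
    ((range (m + k)).filter p).card =
      ((range m).filter p).card + ((range k).filter (fun n => p (m + n))).card := by
  induction k with
  | zero => simp
  | succ k ih =>
    rw [← add_assoc, range_add_one, range_add_one, filter_insert, filter_insert]
    by_cases h : p (m + k) <;>
      simp [h, ih, Finset.card_insert_of_notMem, Finset.mem_filter, add_assoc]

private lemma block (T s : ℕ) (hT : 0 < T) (hTe : Even T) (hs : 0 < s) (hse : Even s)
    (hgcd : Nat.gcd s T = 2) (b r : ℕ) (hr : r < T) :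
    ((range (T / 2)).filter (fun n => (b + n * s) % T = r)).card =
      if r % 2 = b % 2 then 1 else 0 := by
  obtain ⟨T', hT2⟩ := hTe
  obtain rfl : T = 2 * T' := by omega
  obtain ⟨s', hs2⟩ := hse
  obtain rfl : s = 2 * s' := by omega
  have hT' : 0 < T' := by omega
  have hcop : Nat.Coprime T' s' := by
    have := Nat.gcd_mul_left 2 s' T'
    rw [hgcd] at this
    have h1 : Nat.gcd s' T' = 1 := by omega
    exact (Nat.coprime_comm.mp h1)
  have hhalf : 2 * T' / 2 = T' := by omega
  rw [hhalf]
  set f : ℕ → ℕ := fun n => (b + n * (2 * s')) % (2 * T') with hf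
  -- injectivity
  have hinj : ∀ m ∈ range T', ∀ n ∈ range T', f m = f n → m = n := by
    have key : ∀ m n, m ≤ n → n < T' → f m = f n → m = n := by
      intro m n hmn hn hfe
      have hmod : (b + m * (2 * s')) ≡ (b + n * (2 * s')) [MOD 2 * T'] := by
        simpa [Nat.ModEq, hf] using hfe
      have hle : b + m * (2 * s') ≤ b + n * (2 * s') := by nlinarith
      have hdvd : 2 * T' ∣ (b + n * (2 * s')) - (b + m * (2 * s')) :=
        (Nat.modEq_iff_dvd' hle).mp hmod
      obtain ⟨c, rfl⟩ := Nat.le.dest hmn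
      have heq : (b + (m + c) * (2 * s')) - (b + m * (2 * s')) = 2 * (c * s') := by
        have h1 : (m + c) * (2 * s') = m * (2 * s') + 2 * (c * s') := by ring
        omega
      rw [heq] at hdvd
      have hdvd' : T' ∣ c * s' := by
        rcases hdvd with ⟨k, hk⟩
        refine ⟨k, ?_⟩
        have h2 : 2 * T' * k = 2 * (T' * k) := by ring
        omega
      have hdc : T' ∣ c := hcop.dvd_of_dvd_mul_right hdvd'
      have hc0 : c = 0 := Nat.eq_zero_of_dvd_of_lt hdc (by omega)
      omega
    intro m hm n hn hfe
    simp [mem_range] at hm hn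
    rcases le_total m n with h | h
    · exact key m n h hn hfe
    · exact (key n m h hm hfe.symm).symm
  -- parity of values and range
  have hval : ∀ n, f n < 2 * T' ∧ f n % 2 = b % 2 := by
    intro n
    constructor
    · exact Nat.mod_lt _ (by omega)
    · have h2 : (2 : ℕ) ∣ 2 * T' := ⟨T', rfl⟩
      rw [hf]
      simp only
      rw [Nat.mod_mod_of_dvd _ h2]
      have h3 : b + n * (2 * s') = b + n * s' * 2 := by ring
      rw [h3, Nat.add_mul_mod_self_right]
  set S : Finset ℕ := (range (2 * T')).filter (fun x => x % 2 = b % 2) with hS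
  have himg_sub : (range T').image f ⊆ S := by
    intro x hx
    simp only [mem_image] at hx
    obtain ⟨n, _, rfl⟩ := hx
    simp [hS, mem_filter, mem_range, (hval n).1, (hval n).2]
  have hScard : S.card = T' := by
    have hSeq : S = (range T').image (fun k => 2 * k + b % 2) := by
      ext x
      simp only [hS, mem_filter, mem_range, mem_image]
      constructor
      · intro ⟨h1, h2⟩; exact ⟨x / 2, by omega, by omega⟩
      · rintro ⟨k, hk, rfl⟩; omega
    rw [hSeq, card_image_of_injective _ (fun x y h => by omega), card_range]
  have himgcard : ((range T').image f).card = T' := by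
    rw [Finset.card_image_of_injOn hinj, card_range]
  have himg : (range T').image f = S :=
    Finset.eq_of_subset_of_card_le himg_sub (by omega)
  have hmem : r ∈ (range T').image f ↔ r % 2 = b % 2 := by
    rw [himg]; simp [hS, mem_filter, mem_range, hr]
  have hcount : ((range T').filter (fun n => f n = r)).card =
      (((range T').image f).filter (fun x => x = r)).card := by
    rw [Finset.filter_image]
    rw [Finset.card_image_of_injOn (fun x hx y hy h => hinj x (filter_subset _ _ hx) y
      (filter_subset _ _ hy) h)]
  rw [hcount, Finset.filter_eq']
  by_cases h : r % 2 = b % 2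
  · rw [if_pos (hmem.mpr h), if_pos h]; simp
  · rw [if_neg (fun hc => h (hmem.mp hc)), if_neg h]; simp

/-- For an even positive period `T` and an even positive step `s` with `gcd(s, T) = 2`,
the progression `a + n·s` equidistributes over exactly the residues modulo `T` in the
parity class of `a`: among the first `N·(T/2)` indices, each residue `r < T` with
`r % 2 = a % 2` is hit exactly `N` times and all other residues are never hit. -/
theorem stmt6 (T s : ℕ) (hT : 0 < T) (hTe : Even T) (hs : 0 < s) (hse : Even s)
    (hgcd : Nat.gcd s T = 2) (a : ℕ) :
    ∀ N r : ℕ, r < T →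
      ((Finset.range (N * (T / 2))).filter (fun n => (a + n * s) % T = r)).card =
        if r % 2 = a % 2 then N else 0 := by
  intro N
  induction N with
  | zero => intro r hr; simp
  | succ N ih =>
    intro r hr
    have hshift : ∀ n, (a + (N * (T / 2) + n) * s) % T = (a + n * s) % T := by
      intro n
      obtain ⟨T', rfl⟩ : ∃ T', T = 2 * T' := by
        obtain ⟨T', h⟩ := hTe; exact ⟨T', by omega⟩
      obtain ⟨s', rfl⟩ : ∃ s', s = 2 * s' := by
        obtain ⟨s', h⟩ := hse; exact ⟨s', by omega⟩
      have h1 : (N * (2 * T' / 2) + n) * (2 * s') = n * (2 * s') + (N * s') * (2 * T') := by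
        have : 2 * T' / 2 = T' := by omega
        rw [this]; ring
      rw [h1, ← add_assoc, Nat.add_mul_mod_self_right]
    have : (N + 1) * (T / 2) = N * (T / 2) + T / 2 := by ring
    rw [this, filterRangeAdd]
    rw [ih r hr]
    have hb := block T s hT hTe hs hse hgcd a r hr
    have : ((range (T / 2)).filter (fun n => (a + (N * (T / 2) + n) * s) % T = r)).card
        = ((range (T / 2)).filter (fun n => (a + n * s) % T = r)).card := by
      congr 1
      apply Finset.filter_congr
      intro n _
      simp [hshift n]
    rw [this, hb]
    split_ifs <;> omega
end

section
/- Let T be an even positive natural number, s an even positive natural number with gcd(s, T) = 2, a a natural number, and g : ℕ → ℝ a T-periodic function. Then the Cesàro averages (1/N)·Σ_{n=0}^{N−1} g(a + n·s) converge, as N → ∞, to (2/T)·Σ_{t < T, t % 2 = a % 2} g(t). In particular the limit depends on a only through the parity of a, and does not depend on s. -/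
open Filter Finset

private lemma cesaro_periodic (M : ℕ) (hM : 0 < M) (h : ℕ → ℝ)
    (hp : ∀ n, h (n + M) = h n) :
    Tendsto (fun N : ℕ => (1 / (N : ℝ)) * ∑ n ∈ range N, h n) atTop
      (nhds ((1 / (M : ℝ)) * ∑ n ∈ range M, h n)) := by
  set S : ℝ := ∑ n ∈ range M, h n with hS
  set C : ℝ := ∑ n ∈ range M, |h n| with hC
  have hsplit : ∀ q r : ℕ, ∑ n ∈ range (q * M + r), h n = q * S + ∑ n ∈ range r, h n := by
    intro q
    induction q with
    | zero => intro r; simp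
    | succ q ih =>
      intro r
      have : (q + 1) * M + r = q * M + (M + r) := by ring
      rw [this, ih (M + r), Finset.sum_range_add]
      have : ∀ n ∈ range r, h (M + n) = h n := by
        intro n _
        rw [add_comm, hp]
      rw [Finset.sum_congr rfl this]
      push_cast
      ring
  have hPbound : ∀ r : ℕ, r ≤ M → |∑ n ∈ range r, h n| ≤ C := by
    intro r hr
    calc |∑ n ∈ range r, h n| ≤ ∑ n ∈ range r, |h n| := Finset.abs_sum_le_sum_abs _ _
    _ ≤ C := Finset.sum_le_sum_of_subset_of_nonneg
        (Finset.range_subset_range.mpr hr) (by intro i _ _; positivity)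
  have hM0 : (M : ℝ) ≠ 0 := Nat.cast_ne_zero.mpr hM.ne'
  rw [show nhds ((1 / (M : ℝ)) * S) = nhds (0 + (1 / (M : ℝ)) * S) by rw [zero_add]]
  have key : Tendsto (fun N : ℕ => (1 / (N : ℝ)) * ∑ n ∈ range N, h n - (1 / M) * S)
      atTop (nhds 0) := by
    apply squeeze_zero_norm' (a := fun N : ℕ => (C + |S|) / N)
    · filter_upwards [eventually_ge_atTop 1] with N hN
      have hN0 : (N : ℝ) ≠ 0 := Nat.cast_ne_zero.mpr (by omega)
      have hNpos : (0:ℝ) < N := by positivity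
      set q := N / M
      set r := N % M
      have hNeq : N = q * M + r := by
        rw [Nat.div_add_mod'] 
      have hrM : r < M := Nat.mod_lt _ hM
      have hsum := hsplit q r
      rw [← hNeq] at hsum
      set P : ℝ := ∑ n ∈ range r, h n
      have hNR : (N : ℝ) = q * M + r := by exact_mod_cast congrArg (Nat.cast : ℕ → ℝ) hNeq
      have heq : (1 / (N : ℝ)) * ∑ n ∈ range N, h n - (1 / M) * S
          = ((M : ℝ) * P - r * S) / (N * M) := by
        rw [hsum]
        field_simp
        linear_combination (-S) * hNR
      rw [heq]
      rw [Real.norm_eq_abs, abs_div, abs_of_pos (by positivity : (0:ℝ) < (N:ℝ) * M)]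
      rw [div_le_div_iff₀ (by positivity) hNpos]
      have h1 : |(M : ℝ) * P - r * S| ≤ M * C + M * |S| := by
        calc |(M : ℝ) * P - r * S| ≤ |(M:ℝ) * P| + |(r:ℝ) * S| := abs_sub _ _
        _ ≤ M * C + M * |S| := by
            rw [abs_mul, abs_mul, Nat.abs_cast, Nat.abs_cast]
            have := hPbound r hrM.le
            have hrle : (r : ℝ) ≤ M := by exact_mod_cast hrM.le
            have hSnn : (0:ℝ) ≤ |S| := abs_nonneg _
            nlinarith [Nat.cast_nonneg (α := ℝ) M]
      calc |(M : ℝ) * P - r * S| * N ≤ (M * C + M * |S|) * N := by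
            nlinarith
      _ = (C + |S|) * (N * M) := by ring
    · exact tendsto_const_div_atTop_nhds_zero_nat _
  simpa using key.add_const ((1 / (M : ℝ)) * S)

/-- For an even positive period `T`, an even positive step `s` with `gcd(s, T) = 2`, and a
`T`-periodic `g`, the Cesàro averages of `g` along `a + n·s` converge to the parity-class
average `(2/T)·Σ_{t < T, t % 2 = a % 2} g t`; in particular the limit depends on `a` only
through its parity and does not depend on `s`. -/
theorem stmt7 (T s : ℕ) (hT : 0 < T) (hTe : Even T) (hs : 0 < s) (hse : Even s)
    (hgcd : Nat.gcd s T = 2) (a : ℕ)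
    (g : ℕ → ℝ) (hg : ∀ n, g (n + T) = g n) :
    Filter.Tendsto
      (fun N : ℕ => (1 / (N : ℝ)) * ∑ n ∈ Finset.range N, g (a + n * s))
      Filter.atTop
      (nhds ((2 / (T : ℝ)) *
        ∑ t ∈ (Finset.range T).filter (fun t => t % 2 = a % 2), g t)) := by
  obtain ⟨M, hTM⟩ : ∃ M, T = 2 * M := by
    obtain ⟨m, hm⟩ := hTe; exact ⟨m, by omega⟩
  obtain ⟨u, hsu⟩ : ∃ u, s = 2 * u := by
    obtain ⟨m, hm⟩ := hse; exact ⟨m, by omega⟩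
  have hM : 0 < M := by omega
  have hu : 0 < u := by omega
  have hcop : Nat.Coprime u M := by
    have : Nat.gcd (2 * u) (2 * M) = 2 * Nat.gcd u M := Nat.gcd_mul_left 2 u M
    have h2 : Nat.gcd s T = 2 * Nat.gcd u M := by rw [hsu, hTM]; exact this
    rw [hgcd] at h2
    unfold Nat.Coprime
    omega
  -- periodicity helpers
  have gk : ∀ k x, g (x + T * k) = g x := by
    intro k
    induction k with
    | zero => intro x; simp
    | succ k ih =>
      intro x
      have : x + T * (k + 1) = (x + T * k) + T := by ring
      rw [this, hg, ih]
  have gmod : ∀ x, g (x % T) = g x := by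
    intro x
    conv_rhs => rw [← Nat.mod_add_div x T]
    rw [gk]
  -- the folded function is M-periodic
  have hper : ∀ n, g (a + (n + M) * s) = g (a + n * s) := by
    intro n
    have : a + (n + M) * s = (a + n * s) + T * u := by
      rw [hTM, hsu]; ring
    rw [this, gk]
  have hces := cesaro_periodic M hM (fun n => g (a + n * s)) hper
  -- identify the sums
  have hinj : ∀ x ∈ range M, ∀ y ∈ range M,
      (a + x * s) % T = (a + y * s) % T → x = y := by
    have main : ∀ x y : ℕ, x ≤ y → y < M → (a + x * s) % T = (a + y * s) % T → x = y := by
      intro x y hxy hyM hmod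
      have hle : a + x * s ≤ a + y * s := by
        have : x * s ≤ y * s := Nat.mul_le_mul_right s hxy
        omega
      have hdvd : T ∣ (a + y * s) - (a + x * s) :=
        (Nat.modEq_iff_dvd' hle).mp hmod
      have hsub : (a + y * s) - (a + x * s) = (y - x) * s := by
        have : y * s - x * s = (y - x) * s := (Nat.sub_mul y x s).symm
        omega
      rw [hsub, hsu, hTM] at hdvd
      have hdvd2 : M ∣ (y - x) * u := by
        obtain ⟨k, hk⟩ := hdvd
        refine ⟨k, ?_⟩
        have : (y - x) * (2 * u) = 2 * ((y - x) * u) := by ring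
        rw [this] at hk
        have hk2 : 2 * M * k = 2 * (M * k) := by ring
        rw [hk2] at hk
        omega
      have : M ∣ (y - x) := (Nat.Coprime.dvd_of_dvd_mul_right hcop.symm) hdvd2
      have := Nat.eq_zero_of_dvd_of_lt this (by omega)
      omega
    intro x hx y hy hmod
    simp only [Finset.mem_range] at hx hy
    rcases le_total x y with hle | hle
    · exact main x y hle hy hmod
    · exact (main y x hle hx hmod.symm).symm
  have hmem : ∀ n ∈ range M, (a + n * s) % T ∈ (range T).filter (fun t => t % 2 = a % 2) := by
    intro n _
    rw [Finset.mem_filter, Finset.mem_range]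
    constructor
    · exact Nat.mod_lt _ hT
    · have h2T : 2 ∣ T := ⟨M, hTM⟩
      rw [Nat.mod_mod_of_dvd _ h2T]
      have : a + n * s = a + 2 * (n * u) := by rw [hsu]; ring
      rw [this, Nat.add_mul_mod_self_left]
  have hcardfilter : ((range T).filter (fun t => t % 2 = a % 2)).card = M := by
    have himg : (range T).filter (fun t => t % 2 = a % 2)
        = (range M).image (fun m => 2 * m + a % 2) := by
      ext t
      simp only [Finset.mem_filter, Finset.mem_range, Finset.mem_image]
      constructor
      · rintro ⟨ht, hpar⟩
        exact ⟨t / 2, by omega, by omega⟩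
      · rintro ⟨m, hm, rfl⟩
        omega
    rw [himg, Finset.card_image_of_injective _ (fun x y => by omega), Finset.card_range]
  have himage : ((range M).image (fun n => (a + n * s) % T))
      = (range T).filter (fun t => t % 2 = a % 2) := by
    apply Finset.eq_of_subset_of_card_le
    · intro t ht
      obtain ⟨n, hn, rfl⟩ := Finset.mem_image.mp ht
      exact hmem n hn
    · rw [hcardfilter, Finset.card_image_of_injOn hinj, Finset.card_range]
  have hsums : ∑ t ∈ (range T).filter (fun t => t % 2 = a % 2), g t
      = ∑ n ∈ range M, g (a + n * s) := by
    rw [← himage, Finset.sum_image hinj]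
    exact Finset.sum_congr rfl (fun n _ => gmod _)
  have hconst : (2 / (T : ℝ)) = 1 / (M : ℝ) := by
    have : (T : ℝ) = 2 * M := by exact_mod_cast hTM
    rw [this]
    field_simp
  rw [hconst, hsums]
  exact hces
end

section
/- Let T be an even positive natural number, s an even positive natural number with gcd(s, T) = 2, and a a natural number, and let o : ℕ → ℝ be T-periodic with o(n) ∈ {0, 1} for all n and with Σ_{t < T, t % 2 = a % 2} o(t) > 0. Then the ratios (Σ_{n=0}^{N−1} o(a + n·s)·o(a + n·s + 1)) / (Σ_{n=0}^{N−1} o(a + n·s)) converge, as N → ∞, to (Σ_{t < T, t % 2 = a % 2} o(t)·o(t+1)) / (Σ_{t < T, t % 2 = a % 2} o(t)). In particular the limit depends on a only through the parity of a, and does not depend on s. -/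
open Finset Filter

private lemma cesaro_periodic_s8 (m : ℕ) (hm : 0 < m) (f : ℕ → ℝ)
    (h0 : ∀ n, 0 ≤ f n) (h1 : ∀ n, f n ≤ 1) (hper : ∀ n, f (n + m) = f n) :
    Filter.Tendsto (fun N : ℕ => (∑ i ∈ Finset.range N, f i) / N) Filter.atTop
      (nhds ((∑ i ∈ Finset.range m, f i) / m)) := by
  set A := ∑ i ∈ Finset.range m, f i with hA
  have hshift : ∀ k n, f (n + k * m) = f n := by
    intro k
    induction k with
    | zero => simp
    | succ k ih =>
      intro n
      have : n + (k + 1) * m = n + k * m + m := by ring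
      rw [this, hper, ih]
  have key : ∀ N, ∑ i ∈ Finset.range N, f i
      = (N / m : ℕ) * A + ∑ i ∈ Finset.range (N % m), f i := by
    intro N
    have hq : ∀ q, ∑ i ∈ Finset.range (q * m), f i = q * A := by
      intro q
      induction q with
      | zero => simp
      | succ q ih =>
        have : (q + 1) * m = q * m + m := by ring
        rw [this, Finset.sum_range_add, ih]
        have : ∑ i ∈ Finset.range m, f (q * m + i) = A := by
          apply Finset.sum_congr rfl
          intro i _
          rw [Nat.add_comm, hshift]
        rw [this]; push_cast; ring
    conv_lhs => rw [← Nat.div_add_mod N m, Nat.mul_comm]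
    rw [Finset.sum_range_add, hq]
    congr 1
    apply Finset.sum_congr rfl
    intro i _
    rw [Nat.add_comm, hshift]
  have hbound : ∀ r, 0 ≤ ∑ i ∈ Finset.range r, f i := fun r =>
    Finset.sum_nonneg fun i _ => h0 i
  have hboundm : ∀ N : ℕ, ∑ i ∈ Finset.range (N % m), f i ≤ m := by
    intro N
    calc ∑ i ∈ Finset.range (N % m), f i ≤ ∑ i ∈ Finset.range (N % m), 1 :=
          Finset.sum_le_sum fun i _ => h1 i
      _ = (N % m : ℕ) := by simp
      _ ≤ m := by exact_mod_cast (Nat.mod_lt N hm).le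
  have hlim0 : Filter.Tendsto (fun N : ℕ => (m : ℝ) / N) Filter.atTop (nhds 0) :=
    tendsto_const_div_atTop_nhds_zero_nat (m : ℝ)
  have hres : Filter.Tendsto (fun N : ℕ => (∑ i ∈ Finset.range (N % m), f i) / N)
      Filter.atTop (nhds 0) := by
    apply squeeze_zero (fun N => div_nonneg (hbound _) (Nat.cast_nonneg N)) _ hlim0
    intro N
    rcases Nat.eq_zero_or_pos N with h | h
    · simp [h]
    · gcongr
      exact hboundm N
  have hmodlim : Filter.Tendsto (fun N : ℕ => ((N % m : ℕ) : ℝ) / N) Filter.atTop (nhds 0) := by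
    apply squeeze_zero (fun N => div_nonneg (Nat.cast_nonneg _) (Nat.cast_nonneg N)) _ hlim0
    intro N
    rcases Nat.eq_zero_or_pos N with h | h
    · simp [h]
    · gcongr
      exact_mod_cast (Nat.mod_lt N hm).le
  have hmain : Filter.Tendsto
      (fun N : ℕ => A / m * (1 - ((N % m : ℕ) : ℝ) / N) + (∑ i ∈ Finset.range (N % m), f i) / N)
      Filter.atTop (nhds (A / m * (1 - 0) + 0)) :=
    ((tendsto_const_nhds.sub hmodlim).const_mul _).add hres
  have heq : A / (m : ℝ) * (1 - 0) + 0 = A / m := by ring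
  rw [heq] at hmain
  refine Filter.Tendsto.congr' ?_ hmain
  filter_upwards [Filter.eventually_gt_atTop 0] with N hN
  have hNR : (N : ℝ) ≠ 0 := by positivity
  have hmR : (m : ℝ) ≠ 0 := by positivity
  have hdm : ((N / m : ℕ) : ℝ) * m = (N : ℝ) - ((N % m : ℕ) : ℝ) := by
    have h := Nat.div_add_mod N m
    have h2 : ((m * (N / m) + N % m : ℕ) : ℝ) = (N : ℝ) := by rw [h]
    push_cast at h2
    linarith
  rw [key N]
  field_simp
  linear_combination (-A) * hdm

/-- For an even positive period `T`, an even positive step `s` with `gcd(s, T) = 2`, and a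
binary `T`-periodic observation stream `o` whose sum over the parity class of `a` is
positive, the empirical conditional probabilities obtained by folding at step `s` from
offset `a` converge to the parity-class conditional frequency; in particular the limit
depends on `a` only through its parity and does not depend on `s`. -/
theorem stmt8 (T s : ℕ) (hT : 0 < T) (hTe : Even T) (hs : 0 < s) (hse : Even s)
    (hgcd : Nat.gcd s T = 2) (a : ℕ)
    (o : ℕ → ℝ) (hper : ∀ n, o (n + T) = o n) (hbin : ∀ n, o n = 0 ∨ o n = 1)
    (hpos : 0 < ∑ t ∈ (Finset.range T).filter (fun t => t % 2 = a % 2), o t) :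
    Filter.Tendsto
      (fun N : ℕ =>
        (∑ n ∈ Finset.range N, o (a + n * s) * o (a + n * s + 1)) /
          (∑ n ∈ Finset.range N, o (a + n * s)))
      Filter.atTop
      (nhds ((∑ t ∈ (Finset.range T).filter (fun t => t % 2 = a % 2), o t * o (t + 1)) /
        (∑ t ∈ (Finset.range T).filter (fun t => t % 2 = a % 2), o t))) := by
  classical
  set C := (Finset.range T).filter (fun t => t % 2 = a % 2) with hC
  obtain ⟨m, hm2⟩ := hTe
  have hTm : T = 2 * m := by omega
  have hm : 0 < m := by omega
  obtain ⟨s', hs2⟩ := hse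
  -- basic facts about o
  have hperk : ∀ k x, o (x + k * T) = o x := by
    intro k
    induction k with
    | zero => simp
    | succ k ih =>
      intro x
      have h : x + (k + 1) * T = x + k * T + T := by ring
      rw [h, hper, ih]
  have omod : ∀ x, o (x % T) = o x := by
    intro x
    conv_rhs => rw [← Nat.mod_add_div x T, Nat.mul_comm]
    exact (hperk (x / T) (x % T)).symm
  have ocong : ∀ x y, x % T = y % T → o x = o y := by
    intro x y h
    rw [← omod x, ← omod y, h]
  have o01 : ∀ n, 0 ≤ o n ∧ o n ≤ 1 := by
    intro n; rcases hbin n with h | h <;> simp [h]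
  -- injectivity of the fold map
  have hinj : ∀ x ∈ Finset.range m, ∀ y ∈ Finset.range m,
      (a + x * s) % T = (a + y * s) % T → x = y := by
    intro x hx y hy h
    have h1 : Nat.ModEq T (a + x * s) (a + y * s) := h
    have h2 : Nat.ModEq T (x * s) (y * s) := Nat.ModEq.add_left_cancel' a h1
    have h3 := Nat.ModEq.cancel_right_div_gcd hT h2
    have hg : T / Nat.gcd T s = m := by rw [Nat.gcd_comm, hgcd]; omega
    rw [hg] at h3
    have h4 : x % m = y % m := h3
    simp only [Finset.mem_range] at hx hy
    rwa [Nat.mod_eq_of_lt hx, Nat.mod_eq_of_lt hy] at h4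
  -- the image of the fold map is the parity class
  have himg : (Finset.range m).image (fun n => (a + n * s) % T) = C := by
    apply Finset.eq_of_subset_of_card_le
    · intro t ht
      simp only [Finset.mem_image, Finset.mem_range] at ht
      obtain ⟨n, hn, rfl⟩ := ht
      simp only [hC, Finset.mem_filter, Finset.mem_range]
      refine ⟨Nat.mod_lt _ hT, ?_⟩
      rw [Nat.mod_mod_of_dvd _ ⟨m, hTm⟩]
      have he : a + n * s = a + 2 * (n * s') := by rw [hs2]; ring
      rw [he, Nat.add_mul_mod_self_left]
    · have hcards : C.card = m := by
        have hCimg : C = (Finset.range m).image (fun k => 2 * k + a % 2) := by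
          ext t
          simp only [hC, Finset.mem_filter, Finset.mem_range, Finset.mem_image]
          constructor
          · rintro ⟨ht, hp⟩
            exact ⟨t / 2, by omega, by omega⟩
          · rintro ⟨k, hk, rfl⟩
            omega
        rw [hCimg, Finset.card_image_of_injective _ (fun x y h => by omega),
          Finset.card_range]
      rw [hcards, Finset.card_image_of_injOn
        (fun x hx y hy h => hinj x (by simpa using hx) y (by simpa using hy) h),
        Finset.card_range]
  -- transfer sums over the parity class to sums over the fold indices
  have hsum : ∀ h : ℕ → ℝ, ∑ t ∈ C, h t = ∑ n ∈ Finset.range m, h ((a + n * s) % T) := by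
    intro h
    rw [← himg, Finset.sum_image hinj]
  have hAeq : ∑ t ∈ C, o t = ∑ n ∈ Finset.range m, o (a + n * s) := by
    rw [hsum]; exact Finset.sum_congr rfl fun n _ => omod _
  have hBeq : ∑ t ∈ C, o t * o (t + 1)
      = ∑ n ∈ Finset.range m, o (a + n * s) * o (a + n * s + 1) := by
    rw [hsum]
    refine Finset.sum_congr rfl fun n _ => ?_
    rw [omod]
    congr 1
    exact ocong _ _ (Nat.mod_add_mod _ _ _)
  -- periodicity of the folded streams
  have hstep : ∀ n, a + (n + m) * s = a + n * s + s' * T := by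
    intro n; rw [hTm, hs2]; ring
  have hfper : ∀ n, o (a + (n + m) * s) = o (a + n * s) := by
    intro n; rw [hstep n, hperk]
  have hgper : ∀ n, o (a + (n + m) * s) * o (a + (n + m) * s + 1)
      = o (a + n * s) * o (a + n * s + 1) := by
    intro n
    rw [hstep n, hperk]
    congr 1
    have h : a + n * s + s' * T + 1 = a + n * s + 1 + s' * T := by ring
    rw [h, hperk]
  -- apply the Cesàro lemma
  have hden := cesaro_periodic_s8 m hm (fun n => o (a + n * s))
    (fun n => (o01 _).1) (fun n => (o01 _).2) hfper
  have hnum := cesaro_periodic_s8 m hm (fun n => o (a + n * s) * o (a + n * s + 1))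
    (fun n => mul_nonneg (o01 _).1 (o01 _).1)
    (fun n => mul_le_one₀ (o01 _).2 (o01 _).1 (o01 _).2) hgper
  rw [hAeq] at hpos
  have hApos : (0:ℝ) < (∑ n ∈ Finset.range m, o (a + n * s)) / m :=
    div_pos hpos (by exact_mod_cast hm)
  have hlim := hnum.div hden (ne_of_gt hApos)
  have hmne : (m : ℝ) ≠ 0 := by positivity
  have hAne : (∑ n ∈ Finset.range m, o (a + n * s)) ≠ 0 := ne_of_gt hpos
  have hval : (∑ n ∈ Finset.range m, o (a + n * s) * o (a + n * s + 1)) / (m:ℝ)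
        / ((∑ n ∈ Finset.range m, o (a + n * s)) / (m:ℝ))
      = (∑ n ∈ Finset.range m, o (a + n * s) * o (a + n * s + 1))
        / (∑ n ∈ Finset.range m, o (a + n * s)) := by
    field_simp
  rw [hval] at hlim
  rw [hAeq, hBeq]
  refine Filter.Tendsto.congr' ?_ hlim
  filter_upwards [Filter.eventually_gt_atTop 0] with N hN
  have hNne : (N : ℝ) ≠ 0 := by positivity
  rw [Pi.div_apply]
  field_simp
end

section
/- Let M and N be positive natural numbers, let O : Fin M → Fin N → ℕ satisfy O(i)(n) ≤ 1 for all i, n, let c : Fin M → ℕ satisfy c(i) ≤ 1 for all i, and let y : Fin N → ℕ. Then Σ_{n : Fin N} ⌊(Σ_{i} (c(i)·O(i)(n) + (1 − c(i))·(1 − O(i)(n)))) / M⌋ · y(n) equals the sum of y(n) over those n ∈ Fin N such that O(i)(n) = c(i) for all i. -/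
lemma term_ite (a b : ℕ) (ha : a ≤ 1) (hb : b ≤ 1) :
    a * b + (1 - a) * (1 - b) = if b = a then 1 else 0 := by
  interval_cases a <;> interval_cases b <;> simp

/-- Correctness of the BbCPT numerator: for binary observation columns `O` and a binary
condition vector `c`, the closed-form matrix expression
`Σₙ ⌊(Σᵢ (cᵢ·Oᵢₙ + (1 − cᵢ)·(1 − Oᵢₙ))) / M⌋ · yₙ` sums `y` exactly over the columns
matching the conditioning event `c`. Subtraction and division are truncated. -/
theorem stmt10 (M N : ℕ) (hM : 0 < M) (hN : 0 < N) (O : Fin M → Fin N → ℕ)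
    (hO : ∀ i n, O i n ≤ 1) (c : Fin M → ℕ) (hc : ∀ i, c i ≤ 1) (y : Fin N → ℕ) :
    ∑ n : Fin N, ((∑ i, (c i * O i n + (1 - c i) * (1 - O i n))) / M) * y n =
      ∑ n ∈ Finset.univ.filter (fun n => ∀ i, O i n = c i), y n := by
  rw [Finset.sum_filter]
  refine Finset.sum_congr rfl fun n _ => ?_
  have hsum : (∑ i, (c i * O i n + (1 - c i) * (1 - O i n)))
      = ∑ i, (if O i n = c i then 1 else 0) := by
    refine Finset.sum_congr rfl fun i _ => term_ite _ _ (hc i) (hO i n)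
  rw [hsum]
  by_cases h : ∀ i, O i n = c i
  · simp only [h, if_pos h, if_true]
    simp [Finset.sum_const, Nat.div_self hM]
  · rw [if_neg h]
    have hlt : (∑ i, (if O i n = c i then (1:ℕ) else 0)) < M := by
      obtain ⟨j, hj⟩ := not_forall.mp h
      calc (∑ i, (if O i n = c i then (1:ℕ) else 0))
          < ∑ i : Fin M, 1 := by
            apply Finset.sum_lt_sum (fun i _ => by split <;> omega)
              ⟨j, Finset.mem_univ j, by simp [hj]⟩
        _ = M := by simp
    rw [Nat.div_eq_of_lt hlt, zero_mul]
end

section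
/- Let Ω be a probability space and let X, Y, Z, W be measurable random variables on Ω taking values in finite measurable spaces (with measurable singletons). If the pair ⟨X, Y⟩ is conditionally independent of W given Z, then the conditional mutual information satisfies I[X : Y | ⟨Z, W⟩] = I[X : Y | Z]. -/
open MeasureTheory ProbabilityTheory


/-- Shannon entropy of a finitely-valued random variable `X` under the measure `μ`. -/
noncomputable def entropy {Ω S : Type*} [MeasurableSpace Ω] [Fintype S]
    (μ : Measure Ω) (X : Ω → S) : ℝ :=
  ∑ s : S, Real.negMulLog (μ (X ⁻¹' {s})).toReal

/-- Conditional Shannon entropy `H[Y | X] = Σ_s P(X = s) · H(Y | X = s)` for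
finitely-valued random variables. -/
noncomputable def condEntropy {Ω S U : Type*} [MeasurableSpace Ω] [Fintype S] [Fintype U]
    (μ : Measure Ω) (Y : Ω → U) (X : Ω → S) : ℝ :=
  ∑ s : S, (μ (X ⁻¹' {s})).toReal *
    ∑ u : U, Real.negMulLog
      ((μ (X ⁻¹' {s} ∩ Y ⁻¹' {u})).toReal / (μ (X ⁻¹' {s})).toReal)

/-- Conditional mutual information `I[X : Y | Z] = H[X | Z] + H[Y | Z] − H[⟨X, Y⟩ | Z]`
for finitely-valued random variables. -/
noncomputable def condMutualInfo {Ω S U V : Type*} [MeasurableSpace Ω]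
    [Fintype S] [Fintype U] [Fintype V]
    (μ : Measure Ω) (X : Ω → S) (Y : Ω → U) (Z : Ω → V) : ℝ :=
  condEntropy μ X Z + condEntropy μ Y Z - condEntropy μ (fun ω => (X ω, Y ω)) Z

/-- A function measurable w.r.t. `comap Z` is constant on fibers of `Z`. -/
lemma constOnFiber {Ω V α : Type*} [MeasurableSpace V] [MeasurableSpace α]
    [MeasurableSingletonClass α] {Z : Ω → V} {f : Ω → α}
    (hf : Measurable[MeasurableSpace.comap Z inferInstance] f)
    {ω₀ ω₁ : Ω} (h : Z ω₀ = Z ω₁) : f ω₀ = f ω₁ := by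
  obtain ⟨t, -, hteq⟩ := hf (measurableSet_singleton (f ω₀))
  have h0 : ω₀ ∈ Z ⁻¹' t := by rw [hteq]; exact rfl
  have h1 : ω₁ ∈ Z ⁻¹' t := by simpa [Set.mem_preimage, ← h] using h0
  rw [hteq] at h1
  exact h1.symm

/-- Key factorization: conditional independence (expressed via conditional expectations)
gives the product formula on each fiber of `Z`. -/
lemma keyFact {Ω V : Type*} [mΩ : MeasurableSpace Ω] [MeasurableSpace V]
    [MeasurableSingletonClass V]
    (μ : Measure Ω) [IsProbabilityMeasure μ] {Z : Ω → V} (hZ : Measurable Z)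
    {A B : Set Ω} (hA : MeasurableSet A) (hB : MeasurableSet B)
    (hcond : (μ⟦A ∩ B | MeasurableSpace.comap Z inferInstance⟧)
      =ᵐ[μ] fun ω => (μ⟦A | MeasurableSpace.comap Z inferInstance⟧) ω
        * (μ⟦B | MeasurableSpace.comap Z inferInstance⟧) ω)
    (v : V) :
    (μ (A ∩ B ∩ Z ⁻¹' {v})).toReal * (μ (Z ⁻¹' {v})).toReal
      = (μ (A ∩ Z ⁻¹' {v})).toReal * (μ (B ∩ Z ⁻¹' {v})).toReal := by
  have hm : (MeasurableSpace.comap Z inferInstance : MeasurableSpace Ω) ≤ mΩ :=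
    hZ.comap_le
  have hsm : MeasurableSet[MeasurableSpace.comap Z inferInstance] (Z ⁻¹' {v}) :=
    ⟨{v}, measurableSet_singleton v, rfl⟩
  have hsmeas : MeasurableSet (Z ⁻¹' {v}) := hm _ hsm
  by_cases hμs : μ (Z ⁻¹' {v}) = 0
  · have h1 : μ (A ∩ B ∩ Z ⁻¹' {v}) = 0 :=
      measure_mono_null Set.inter_subset_right hμs
    have h2 : μ (A ∩ Z ⁻¹' {v}) = 0 :=
      measure_mono_null Set.inter_subset_right hμs
    simp [h1, h2]
  have hsne : (Z ⁻¹' {v}).Nonempty := by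
    rcases Set.eq_empty_or_nonempty (Z ⁻¹' {v}) with h' | h'
    · exact absurd (h' ▸ measure_empty) hμs
    · exact h'
  obtain ⟨ω₀, hω₀⟩ := hsne
  have hfiber : ∀ ω ∈ Z ⁻¹' {v}, Z ω = Z ω₀ := by
    intro ω hω
    have e1 : Z ω = v := hω
    have e2 : Z ω₀ = v := hω₀
    rw [e1, e2]
  have hint : ∀ (C : Set Ω), MeasurableSet C →
      ∫ x in Z ⁻¹' {v}, (μ⟦C | MeasurableSpace.comap Z inferInstance⟧) x ∂μ
        = (μ (C ∩ Z ⁻¹' {v})).toReal := by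
    intro C hC
    rw [setIntegral_condExp hm ((integrable_const (1:ℝ)).indicator hC) hsm,
      setIntegral_indicator hC]
    simp [Measure.restrict_apply hC, Set.inter_comm]
    rfl
  have hconstA : ∀ ω ∈ Z ⁻¹' {v},
      (μ⟦A | MeasurableSpace.comap Z inferInstance⟧) ω
        = (μ⟦A | MeasurableSpace.comap Z inferInstance⟧) ω₀ := fun ω hω =>
    constOnFiber (stronglyMeasurable_condExp.measurable) (hfiber ω hω)
  have hconstB : ∀ ω ∈ Z ⁻¹' {v},
      (μ⟦B | MeasurableSpace.comap Z inferInstance⟧) ω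
        = (μ⟦B | MeasurableSpace.comap Z inferInstance⟧) ω₀ := fun ω hω =>
    constOnFiber (stronglyMeasurable_condExp.measurable) (hfiber ω hω)
  set cA : ℝ := (μ⟦A | MeasurableSpace.comap Z inferInstance⟧) ω₀ with hcA_def
  set cB : ℝ := (μ⟦B | MeasurableSpace.comap Z inferInstance⟧) ω₀ with hcB_def
  have hcA : (μ (A ∩ Z ⁻¹' {v})).toReal = cA * (μ (Z ⁻¹' {v})).toReal := by
    rw [← hint A hA, setIntegral_congr_fun hsmeas (fun ω hω => hconstA ω hω)]
    simp [mul_comm]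
    exact mul_comm _ _
  have hcB : (μ (B ∩ Z ⁻¹' {v})).toReal = cB * (μ (Z ⁻¹' {v})).toReal := by
    rw [← hint B hB, setIntegral_congr_fun hsmeas (fun ω hω => hconstB ω hω)]
    simp [mul_comm]
    exact mul_comm _ _
  have hcAB : (μ (A ∩ B ∩ Z ⁻¹' {v})).toReal = cA * cB * (μ (Z ⁻¹' {v})).toReal := by
    rw [← hint (A ∩ B) (hA.inter hB),
      setIntegral_congr_ae hsmeas (hcond.mono fun ω hω _ => hω),
      setIntegral_congr_fun hsmeas
        (fun ω hω => by rw [hconstA ω hω, hconstB ω hω])]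
    simp [mul_comm]
    exact mul_comm _ _
  rw [hcAB, hcA, hcB]
  ring

/-- Conditional entropy doesn't change when additionally conditioning on `W'`,
given the fiberwise factorization. -/
lemma condEntropy_pair_eq {Ω T V W : Type*} [MeasurableSpace Ω]
    [Fintype T] [MeasurableSpace V] [MeasurableSingletonClass V] [Fintype V]
    [MeasurableSpace W] [MeasurableSingletonClass W] [Fintype W]
    (μ : Measure Ω) [IsProbabilityMeasure μ]
    (Tf : Ω → T) (Z : Ω → V) (W' : Ω → W) (hZ : Measurable Z) (hW : Measurable W')
    (hfact : ∀ (t : T) (v : V) (w : W),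
      (μ (Tf ⁻¹' {t} ∩ W' ⁻¹' {w} ∩ Z ⁻¹' {v})).toReal * (μ (Z ⁻¹' {v})).toReal
        = (μ (Tf ⁻¹' {t} ∩ Z ⁻¹' {v})).toReal * (μ (W' ⁻¹' {w} ∩ Z ⁻¹' {v})).toReal) :
    condEntropy μ Tf (fun ω => (Z ω, W' ω)) = condEntropy μ Tf Z := by
  unfold condEntropy
  rw [Fintype.sum_prod_type]
  have hpre : ∀ (v : V) (w : W),
      (fun ω => (Z ω, W' ω)) ⁻¹' {(v, w)} = Z ⁻¹' {v} ∩ W' ⁻¹' {w} := by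
    intro v w
    ext ω
    simp [Prod.ext_iff]
  refine Finset.sum_congr rfl fun v _ => ?_
  simp only [hpre]
  -- inner sums are constant where q v w > 0
  have hterm : ∀ w : W,
      (μ (Z ⁻¹' {v} ∩ W' ⁻¹' {w})).toReal *
        ∑ u : T, Real.negMulLog
          ((μ (Z ⁻¹' {v} ∩ W' ⁻¹' {w} ∩ Tf ⁻¹' {u})).toReal
            / (μ (Z ⁻¹' {v} ∩ W' ⁻¹' {w})).toReal)
      = (μ (Z ⁻¹' {v} ∩ W' ⁻¹' {w})).toReal *
        ∑ u : T, Real.negMulLog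
          ((μ (Z ⁻¹' {v} ∩ Tf ⁻¹' {u})).toReal / (μ (Z ⁻¹' {v})).toReal) := by
    intro w
    by_cases hq : (μ (Z ⁻¹' {v} ∩ W' ⁻¹' {w})).toReal = 0
    · rw [hq]; ring
    · congr 1
      refine Finset.sum_congr rfl fun u _ => ?_
      congr 1
      have hp : (μ (Z ⁻¹' {v})).toReal ≠ 0 := by
        intro h0
        apply hq
        have : μ (Z ⁻¹' {v} ∩ W' ⁻¹' {w}) ≤ μ (Z ⁻¹' {v}) :=
          measure_mono Set.inter_subset_left
        have h0' : μ (Z ⁻¹' {v}) = 0 := by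
          have := measure_ne_top μ (Z ⁻¹' {v})
          exact (ENNReal.toReal_eq_zero_iff _).mp h0 |>.resolve_right this
        simp [measure_mono_null Set.inter_subset_left h0']
      have h1 : Z ⁻¹' {v} ∩ W' ⁻¹' {w} ∩ Tf ⁻¹' {u}
          = Tf ⁻¹' {u} ∩ W' ⁻¹' {w} ∩ Z ⁻¹' {v} := by
        rw [Set.inter_comm (Z ⁻¹' {v}) (W' ⁻¹' {w})]
        ac_rfl
      have h2 : Z ⁻¹' {v} ∩ Tf ⁻¹' {u} = Tf ⁻¹' {u} ∩ Z ⁻¹' {v} := Set.inter_comm _ _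
      have h3 : Z ⁻¹' {v} ∩ W' ⁻¹' {w} = W' ⁻¹' {w} ∩ Z ⁻¹' {v} := Set.inter_comm _ _
      rw [h1, h2, h3]
      have hq' : (μ (W' ⁻¹' {w} ∩ Z ⁻¹' {v})).toReal ≠ 0 := by
        rwa [Set.inter_comm]
      rw [div_eq_div_iff hq' hp]
      exact hfact u v w
  rw [Finset.sum_congr rfl fun w _ => hterm w, ← Finset.sum_mul]
  congr 1
  -- Σ_w μ(Z⁻¹v ∩ W'⁻¹w) = μ(Z⁻¹v)
  have hdisj : Pairwise (Function.onFun Disjoint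
      fun w : W => Z ⁻¹' {v} ∩ W' ⁻¹' {w}) := by
    intro w₁ w₂ hne
    refine Set.disjoint_left.mpr fun ω h₁ h₂ => hne ?_
    have e1 : W' ω = w₁ := h₁.2
    have e2 : W' ω = w₂ := h₂.2
    rw [← e1, ← e2]
  have hunion : (⋃ w : W, Z ⁻¹' {v} ∩ W' ⁻¹' {w}) = Z ⁻¹' {v} := by
    ext ω
    simp
  have hmeas : ∀ w : W, MeasurableSet (Z ⁻¹' {v} ∩ W' ⁻¹' {w}) := fun w =>
    (hZ (measurableSet_singleton v)).inter (hW (measurableSet_singleton w))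
  conv_rhs => rw [← hunion]
  rw [measure_iUnion hdisj hmeas, tsum_fintype,
    ENNReal.toReal_sum (fun w _ => measure_ne_top μ _)]

/-- If the pair `⟨X, Y⟩` is conditionally independent of `W` given `Z`, then
`I[X : Y | ⟨Z, W⟩] = I[X : Y | Z]`. -/
theorem stmt13 {Ω S U V W : Type*} [mΩ : MeasurableSpace Ω] [StandardBorelSpace Ω]
    [MeasurableSpace S] [Fintype S] [MeasurableSingletonClass S]
    [MeasurableSpace U] [Fintype U] [MeasurableSingletonClass U]
    [MeasurableSpace V] [Fintype V] [MeasurableSingletonClass V]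
    [MeasurableSpace W] [Fintype W] [MeasurableSingletonClass W]
    (μ : Measure Ω) [IsProbabilityMeasure μ]
    (X : Ω → S) (Y : Ω → U) (Z : Ω → V) (W' : Ω → W)
    (hX : Measurable X) (hY : Measurable Y) (hZ : Measurable Z) (hW : Measurable W')
    (h : CondIndepFun (MeasurableSpace.comap Z inferInstance)
      hZ.comap_le (fun ω => (X ω, Y ω)) W' μ) :
    condMutualInfo μ X Y (fun ω => (Z ω, W' ω)) = condMutualInfo μ X Y Z := by
  have hXY : Measurable (fun ω => (X ω, Y ω)) := hX.prodMk hY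
  have hcond := (condIndepFun_iff_condExp_inter_preimage_eq_mul hXY hW).mp h
  -- factorization for any set of the form pair⁻¹' s
  have hfactGen : ∀ (s : Set (S × U)), MeasurableSet s → ∀ (v : V) (w : W),
      (μ ((fun ω => (X ω, Y ω)) ⁻¹' s ∩ W' ⁻¹' {w} ∩ Z ⁻¹' {v})).toReal
          * (μ (Z ⁻¹' {v})).toReal
        = (μ ((fun ω => (X ω, Y ω)) ⁻¹' s ∩ Z ⁻¹' {v})).toReal
          * (μ (W' ⁻¹' {w} ∩ Z ⁻¹' {v})).toReal := by
    intro s hs v w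
    exact keyFact μ hZ (hXY hs) (hW (measurableSet_singleton w))
      (hcond s {w} hs (measurableSet_singleton w)) v
  unfold condMutualInfo
  rw [condEntropy_pair_eq μ X Z W' hZ hW (fun t v w => by
      have := hfactGen ({t} ×ˢ Set.univ) ((measurableSet_singleton t).prod .univ) v w
      have hset : (fun ω => (X ω, Y ω)) ⁻¹' ({t} ×ˢ Set.univ) = X ⁻¹' {t} := by
        ext ω; simp [eq_comm]
      rwa [hset] at this),
    condEntropy_pair_eq μ Y Z W' hZ hW (fun t v w => by
      have := hfactGen (Set.univ ×ˢ {t}) (MeasurableSet.univ.prod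
        (measurableSet_singleton t)) v w
      have hset : (fun ω => (X ω, Y ω)) ⁻¹' (Set.univ ×ˢ {t}) = Y ⁻¹' {t} := by
        ext ω; simp [eq_comm]
      rwa [hset] at this),
    condEntropy_pair_eq μ (fun ω => (X ω, Y ω)) Z W' hZ hW (fun t v w => by
      exact hfactGen {t} (measurableSet_singleton t) v w)]
end
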